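/- Let G be a finite simple connected graph of order n ≥ 4 and size m. If G has k pairwise edge-disjoint perfect matchings M_1, …, M_k such that, setting M = M_1 ∪ … ∪ M_k, the graph G − M (obtained by deleting the edges in M) is a connected spanning subgraph of G, then χ'_L(G) ≤ m − kn/2 + k. -/

import Mathlib

open SimpleGraph

/-- Distance from a vertex to an edge: the minimum of the distances to the two endpoints. -/
noncomputable def edgeDist {V : Type*} (G : SimpleGraph V) (v : V) (e : Sym2 V) : ℕ :=
  Sym2.lift ⟨fun x y => min (G.dist v x) (G.dist v y), fun _ _ => min_comm _ _⟩ e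

/-- Distance (in `ℕ∞`) from a vertex to the `i`-th color class of an edge coloring `c`
(it is `⊤` if the class is empty). -/
noncomputable def classDist {V : Type*} (G : SimpleGraph V) {k : ℕ} (c : Sym2 V → Fin k)
    (v : V) (i : Fin k) : ℕ∞ :=
  ⨅ e ∈ {e | e ∈ G.edgeSet ∧ c e = i}, (edgeDist G v e : ℕ∞)

/-- `c` is an edge-locating `k`-coloring of `G`: it is a proper edge coloring (distinct edges
sharing an endpoint get different colors), and distinct vertices have distinct edge color codes
`(d(v, C_1), …, d(v, C_k))`. -/
def IsEdgeLocatingColoring {V : Type*} (G : SimpleGraph V) {k : ℕ} (c : Sym2 V → Fin k) : Prop :=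
  (∀ e ∈ G.edgeSet, ∀ f ∈ G.edgeSet, e ≠ f → (∃ x, x ∈ e ∧ x ∈ f) → c e ≠ c f) ∧
  (∀ u v : V, u ≠ v → ∃ i, classDist G c u i ≠ classDist G c v i)

/-- The edge-locating chromatic number `χ'_L(G)`: the least `k` such that `G` admits an
edge-locating `k`-coloring. -/
noncomputable def edgeLocatingChromaticNumber {V : Type*} (G : SimpleGraph V) : ℕ :=
  sInf {k | ∃ c : Sym2 V → Fin k, IsEdgeLocatingColoring G c}

/-- The join `G + H` of two graphs: all edges of `G`, all edges of `H`, and all edges between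
a vertex of `G` and a vertex of `H`. -/
def graphJoin {α β : Type*} (G : SimpleGraph α) (H : SimpleGraph β) : SimpleGraph (α ⊕ β) :=
  SimpleGraph.fromRel (fun x y =>
    (∃ a b, x = Sum.inl a ∧ y = Sum.inl b ∧ G.Adj a b) ∨
    (∃ a b, x = Sum.inr a ∧ y = Sum.inr b ∧ H.Adj a b) ∨
    (∃ a b, x = Sum.inl a ∧ y = Sum.inr b))

/-- A set `M` of edges of `G` forming a matching: pairwise vertex-disjoint edges of `G`. -/
def IsMatchingSet {V : Type*} (G : SimpleGraph V) (M : Set (Sym2 V)) : Prop :=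
  M ⊆ G.edgeSet ∧ ∀ e ∈ M, ∀ f ∈ M, e ≠ f → ∀ x, x ∈ e → x ∉ f

private lemma exists_adj_aux {V : Type*} [Fintype V] (H : SimpleGraph V) (hH : H.Connected)
    (h2 : 1 < Fintype.card V) (u : V) : ∃ w, H.Adj u w := by
  obtain ⟨v, hv⟩ := Fintype.exists_ne_of_one_lt_card h2 u
  obtain ⟨p⟩ := hH.preconnected u v
  cases p with
  | nil => exact absurd rfl hv
  | cons h q => exact ⟨_, h⟩

private lemma exists_loc_edge {V : Type*} [Fintype V] (H : SimpleGraph V) (hH : H.Connected)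
    (h4 : 4 ≤ Fintype.card V) {u v : V} (huv : u ≠ v) :
    ∃ w, (H.Adj u w ∧ w ≠ v) ∨ (H.Adj v w ∧ w ≠ u) := by
  haveI := Classical.decEq V
  by_contra hcon
  push_neg at hcon
  have hz : ∃ z : V, z ≠ u ∧ z ≠ v := by
    by_contra hz
    push_neg at hz
    have hsub : (Finset.univ : Finset V) ⊆ {u, v} := by
      intro z _
      rcases eq_or_ne z u with h | h
      · simp [h]
      · simp [hz z h]
    have hle := Finset.card_le_card hsub
    rw [Finset.card_univ] at hle
    have h2 : ({u, v} : Finset V).card ≤ 2 := by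
      apply le_trans (Finset.card_insert_le _ _); simp
    omega
  have key : ∀ (b a : V) (p : H.Walk a b), a = u ∨ a = v → b = u ∨ b = v := by
    intro b a p
    induction p with
    | nil => exact id
    | cons h q ih =>
      rintro (rfl | rfl)
      · exact ih (Or.inr ((hcon _).1 h))
      · exact ih (Or.inl ((hcon _).2 h))
  obtain ⟨z, hzu, hzv⟩ := hz
  obtain ⟨p⟩ := hH.preconnected u z
  rcases key z u p (Or.inl rfl) with h | h
  · exact hzu h
  · exact hzv h

/-- If a finite simple connected graph `G` of order `n ≥ 4` and size `m` has `k` pairwise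
edge-disjoint perfect matchings `M_1, …, M_k` whose removal leaves a connected spanning
subgraph, then `χ'_L(G) ≤ m - kn/2 + k`. -/
theorem stmt_13 {V : Type*} [Fintype V] (G : SimpleGraph V) (hG : G.Connected)
    (n m k : ℕ) (hn : n = Fintype.card V) (hn4 : 4 ≤ n) (hm : m = G.edgeSet.ncard)
    (M : Fin k → Set (Sym2 V))
    (hmatch : ∀ i, IsMatchingSet G (M i))
    (hperf : ∀ i, ∀ v : V, ∃ e ∈ M i, v ∈ e)
    (hdisj : ∀ i j, i ≠ j → Disjoint (M i) (M j))
    (hconn : (G.deleteEdges (⋃ i, M i)).Connected) :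
    edgeLocatingChromaticNumber G ≤ m - k * n / 2 + k := by
  classical
  have hVcard : 4 ≤ Fintype.card V := hn ▸ hn4
  set U : Set (Sym2 V) := ⋃ i, M i with hU
  have hUsub : U ⊆ G.edgeSet := by
    intro e he
    rw [hU, Set.mem_iUnion] at he
    obtain ⟨i, hi⟩ := he
    exact (hmatch i).1 hi
  set S : Set (Sym2 V) := G.edgeSet \ U with hSdef
  set N : ℕ := S.ncard with hNdef
  have hcardS : Fintype.card S = N := by
    rw [hNdef, Set.ncard_eq_toFinset_card' S, Set.toFinset_card]
  let eqv : S ≃ Fin N := Fintype.equivFinOfCardEq hcardS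
  have hHedge : (G.deleteEdges U).edgeSet = S := edgeSet_deleteEdges U
  have hNpos : 0 < N := by
    have hne : Nonempty V := Fintype.card_pos_iff.mp (by omega)
    obtain ⟨u⟩ := hne
    obtain ⟨w, hw⟩ := exists_adj_aux _ hconn (by omega) u
    have hmem : s(u, w) ∈ S := by rw [← hHedge]; exact hw
    rw [hNdef]
    exact (Set.ncard_pos (Set.toFinite _)).mpr ⟨_, hmem⟩
  let c : Sym2 V → Fin (N + k) := fun e =>
    if h : e ∈ S then Fin.castAdd k (eqv ⟨e, h⟩)
    else if h2 : ∃ i, e ∈ M i then Fin.natAdd N h2.choose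
    else ⟨0, by omega⟩
  have hcS : ∀ (e) (h : e ∈ S), c e = Fin.castAdd k (eqv ⟨e, h⟩) := fun e h => dif_pos h
  have hcU : ∀ e ∈ U, ∃ i, e ∈ M i ∧ c e = Fin.natAdd N i := by
    intro e he
    have h2 : ∃ i, e ∈ M i := Set.mem_iUnion.mp he
    have hnS : e ∉ S := fun hS => hS.2 he
    refine ⟨h2.choose, h2.choose_spec, ?_⟩
    show (if h : e ∈ S then Fin.castAdd k (eqv ⟨e, h⟩)
      else if h2 : ∃ i, e ∈ M i then Fin.natAdd N h2.choose else ⟨0, by omega⟩) = _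
    rw [dif_neg hnS, dif_pos h2]
  have hproper : ∀ e ∈ G.edgeSet, ∀ f ∈ G.edgeSet, e ≠ f → (∃ x, x ∈ e ∧ x ∈ f) → c e ≠ c f := by
    intro e he f hf hef hx hceq
    by_cases heS : e ∈ S
    · by_cases hfS : f ∈ S
      · rw [hcS e heS, hcS f hfS] at hceq
        have h1 : eqv ⟨e, heS⟩ = eqv ⟨f, hfS⟩ :=
          Fin.ext (by simpa using congrArg Fin.val hceq)
        exact hef (congrArg Subtype.val (eqv.injective h1))
      · have hfU : f ∈ U := by by_contra h; exact hfS ⟨hf, h⟩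
        obtain ⟨i, hi, hcf⟩ := hcU f hfU
        rw [hcS e heS, hcf] at hceq
        have hv := congrArg Fin.val hceq
        simp only [Fin.coe_castAdd, Fin.coe_natAdd] at hv
        have hlt := (eqv ⟨e, heS⟩).isLt
        omega
    · have heU : e ∈ U := by by_contra h; exact heS ⟨he, h⟩
      by_cases hfS : f ∈ S
      · obtain ⟨i, hi, hce⟩ := hcU e heU
        rw [hce, hcS f hfS] at hceq
        have hv := congrArg Fin.val hceq
        simp only [Fin.coe_castAdd, Fin.coe_natAdd] at hv
        have hlt := (eqv ⟨f, hfS⟩).isLt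
        omega
      · have hfU : f ∈ U := by by_contra h; exact hfS ⟨hf, h⟩
        obtain ⟨i, hi, hce⟩ := hcU e heU
        obtain ⟨j, hj, hcf⟩ := hcU f hfU
        rw [hce, hcf] at hceq
        have hv := congrArg Fin.val hceq
        simp only [Fin.coe_natAdd] at hv
        have hij : i = j := Fin.ext (by omega)
        subst hij
        obtain ⟨x, hxe, hxf⟩ := hx
        exact (hmatch i).2 e hi f hj hef x hxe hxf
  have hclass : ∀ (f) (hf : f ∈ S), {e | e ∈ G.edgeSet ∧ c e = c f} = {f} := by
    intro f hf
    ext e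
    simp only [Set.mem_setOf_eq, Set.mem_singleton_iff]
    constructor
    · rintro ⟨he, hce⟩
      by_cases heS : e ∈ S
      · rw [hcS e heS, hcS f hf] at hce
        have h1 : eqv ⟨e, heS⟩ = eqv ⟨f, hf⟩ :=
          Fin.ext (by simpa using congrArg Fin.val hce)
        exact congrArg Subtype.val (eqv.injective h1)
      · have heU : e ∈ U := by by_contra h; exact heS ⟨he, h⟩
        obtain ⟨i, hi, hce'⟩ := hcU e heU
        rw [hce', hcS f hf] at hce
        have hv := congrArg Fin.val hce
        simp only [Fin.coe_castAdd, Fin.coe_natAdd] at hv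
        have hlt := (eqv ⟨f, hf⟩).isLt
        omega
    · rintro rfl
      exact ⟨hf.1, rfl⟩
  have hclassDist : ∀ (f) (hf : f ∈ S) (w : V),
      classDist G c w (c f) = (edgeDist G w f : ℕ∞) := by
    intro f hf w
    show ⨅ e ∈ {e | e ∈ G.edgeSet ∧ c e = c f}, (edgeDist G w e : ℕ∞) = _
    rw [hclass f hf, iInf_singleton]
  have hdistpos : ∀ x y : V, x ≠ y → G.dist x y ≠ 0 := by
    intro x y hxy h
    rcases dist_eq_zero_iff_eq_or_not_reachable.mp h with h' | h'
    · exact hxy h'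
    · exact h' (hG.preconnected x y)
  have hloc : ∀ u v : V, u ≠ v → ∃ i, classDist G c u i ≠ classDist G c v i := by
    intro u v huv
    obtain ⟨w, hw⟩ := exists_loc_edge _ hconn hVcard huv
    rcases hw with ⟨hadj, hwv⟩ | ⟨hadj, hwu⟩
    · have hfS : s(u, w) ∈ S := by rw [← hHedge]; exact hadj
      refine ⟨c s(u, w), ?_⟩
      rw [hclassDist _ hfS u, hclassDist _ hfS v]
      have h1 : edgeDist G u s(u, w) = 0 := by
        simp [edgeDist]
      have h2 : edgeDist G v s(u, w) ≠ 0 := by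
        simp only [edgeDist, Sym2.lift_mk, ne_eq, Nat.min_eq_zero_iff, not_or]
        exact ⟨hdistpos v u huv.symm, hdistpos v w fun h => hwv h.symm⟩
      rw [ne_eq, Nat.cast_inj]
      omega
    · have hfS : s(v, w) ∈ S := by rw [← hHedge]; exact hadj
      refine ⟨c s(v, w), ?_⟩
      rw [hclassDist _ hfS u, hclassDist _ hfS v]
      have h1 : edgeDist G v s(v, w) = 0 := by
        simp [edgeDist]
      have h2 : edgeDist G u s(v, w) ≠ 0 := by
        simp only [edgeDist, Sym2.lift_mk, ne_eq, Nat.min_eq_zero_iff, not_or]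
        exact ⟨hdistpos u v huv, hdistpos u w fun h => hwu h.symm⟩
      rw [ne_eq, Nat.cast_inj]
      omega
  have hstep1 : edgeLocatingChromaticNumber G ≤ N + k :=
    Nat.sInf_le ⟨c, hproper, hloc⟩
  have hUfin : U.Finite := Set.toFinite _
  have hcount : k * n ≤ 2 * U.ncard := by
    have hF : ∀ p : Fin k × V, ∃ e ∈ M p.1, p.2 ∈ e := fun p => hperf p.1 p.2
    have hF1 : ∀ p, (hF p).choose ∈ M p.1 := fun p => (hF p).choose_spec.1
    have hF2 : ∀ p, p.2 ∈ (hF p).choose := fun p => (hF p).choose_spec.2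
    have hmaps : ∀ p ∈ (Finset.univ : Finset (Fin k × V)), (hF p).choose ∈ hUfin.toFinset := by
      intro p _
      rw [Set.Finite.mem_toFinset]
      exact Set.mem_iUnion.mpr ⟨p.1, hF1 p⟩
    have hfiber : ∀ e ∈ hUfin.toFinset,
        (Finset.univ.filter fun p => (hF p).choose = e).card ≤ 2 := by
      intro e he
      induction e using Sym2.ind with
      | _ a b =>
        have hle : (Finset.univ.filter fun p => (hF p).choose = s(a, b)).card ≤
            ({a, b} : Finset V).card := by
          apply Finset.card_le_card_of_injOn (fun p => p.2)
          · intro p hp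
            simp only [Finset.mem_coe, Finset.mem_filter, Finset.mem_univ, true_and] at hp
            have hmem := hF2 p
            rw [hp] at hmem
            simpa [Sym2.mem_iff] using hmem
          · intro p hp q hq hpq
            simp only [Finset.coe_filter, Set.mem_setOf_eq, Finset.mem_univ, true_and] at hp hq
            have hij : p.1 = q.1 := by
              by_contra hne
              exact Set.disjoint_left.mp (hdisj p.1 q.1 hne)
                (hp ▸ hF1 p) (hq ▸ hF1 q)
            exact Prod.ext hij hpq
        refine hle.trans ?_
        apply le_trans (Finset.card_insert_le _ _); simp
    have hmain := Finset.card_le_mul_card_image_of_maps_to hmaps 2 hfiber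
    rw [Finset.card_univ, Fintype.card_prod, Fintype.card_fin,
      ← Set.ncard_eq_toFinset_card U hUfin] at hmain
    rw [hn]
    exact hmain
  have hNle : N ≤ m - k * n / 2 := by
    have hdiff : N = m - U.ncard := by
      rw [hNdef, hSdef, Set.ncard_diff hUsub (Set.toFinite _), ← hm]
    have h2 : k * n / 2 ≤ U.ncard := by
      have hd := Nat.div_le_div_right (c := 2) hcount
      simpa [Nat.mul_div_cancel_left] using hd
    omega
  omega
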